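/- Every value function on finite sequences is present-focused: for any quantitative automaton A on finite words, every cautious strategy for Eve in the letter game on A is winning. -/

import Mathlib

/-- A (total) nondeterministic quantitative automaton with alphabet `α`,
states `Q` and weights `W`. -/
structure QAut (α Q W : Type) where
  init : Q
  trans : Set (Q × α × W × Q)
  total : ∀ q a, ∃ x q', (q, a, x, q') ∈ trans

namespace QAut

variable {α Q W : Type} (A : QAut α Q W)

/-- The state reached after `n` transitions of `τ`, starting from `q`. -/
def stateAt (q : Q) (τ : ℕ → W × Q) : ℕ → Q
  | 0 => q
  | n + 1 => (τ n).2

/-- `τ` is a legal infinite run of `A` from `q` over word `w`. -/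
def RunFrom (q : Q) (w : ℕ → α) (τ : ℕ → W × Q) : Prop :=
  ∀ n, (stateAt q τ n, w n, (τ n).1, (τ n).2) ∈ A.trans

/-- `τ` is a legal infinite run of `A` (from the initial state) over word `w`. -/
def RunOn (w : ℕ → α) (τ : ℕ → W × Q) : Prop := A.RunFrom A.init w τ

/-- The value of automaton `A` on word `w`: the supremum of the values of all runs. -/
noncomputable def wordVal (Val : (ℕ → W) → ℝ) (w : ℕ → α) : ℝ :=
  sSup { v | ∃ τ, A.RunOn w τ ∧ v = Val (fun n => (τ n).1) }

/-- A round of the `k`-token game: the letter played by Adam, Eve's transition,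
and Adam's `k` transitions. -/
abbrev GkRound (α Q W : Type) (k : ℕ) := α × (W × Q) × (Fin k → W × Q)

/-- A strategy of Eve in the `k`-token game: given the history of rounds so far
and the current letter, pick a transition. -/
abbrev GkStrat (α Q W : Type) (k : ℕ) := List (GkRound α Q W k) → α → W × Q

/-- A play of the `k`-token game is consistent with Eve's strategy `s`. -/
def GkConsistent {k : ℕ} (s : GkStrat α Q W k) (π : ℕ → GkRound α Q W k) : Prop :=
  ∀ n, (π n).2.1 = s ((List.range n).map π) (π n).1

/-- Eve's strategy `s` is winning in the `k`-token game with winning condition `good`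
(comparing Eve's weight sequence with Adam's `k` weight sequences): on every
consistent play in which Adam's `k` tokens trace legal runs, Eve's token traces
a legal run and the condition `good` holds. -/
def GkWinning (k : ℕ) (good : (ℕ → W) → (Fin k → ℕ → W) → Prop)
    (s : GkStrat α Q W k) : Prop :=
  ∀ π : ℕ → GkRound α Q W k, GkConsistent s π →
    (∀ j, A.RunOn (fun n => (π n).1) (fun n => (π n).2.2 j)) →
    A.RunOn (fun n => (π n).1) (fun n => (π n).2.1) ∧
      good (fun n => ((π n).2.1).1) (fun j n => ((π n).2.2 j).1)

/-- Eve wins the `k`-token game `G_k(A)` with winning condition `good`. -/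
def EveWinsGk (k : ℕ) (good : (ℕ → W) → (Fin k → ℕ → W) → Prop) : Prop :=
  ∃ s, A.GkWinning k good s

/-- The value-comparison winning condition of token games for value function `Val`:
Eve's run's value is at least the maximum of the values of Adam's runs. -/
def goodVal (Val : (ℕ → W) → ℝ) {k : ℕ} (ve : ℕ → W) (va : Fin k → ℕ → W) : Prop :=
  ∀ j, Val (va j) ≤ Val ve

/-- A round of the letter game: the letter played by Adam and Eve's transition. -/
abbrev LRound (α Q W : Type) := α × (W × Q)

/-- A strategy of Eve in the letter game. -/
abbrev LStrat (α Q W : Type) := List (LRound α Q W) → α → W × Q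

/-- A play of the letter game is consistent with Eve's strategy `s`. -/
def LConsistent (s : LStrat α Q W) (π : ℕ → LRound α Q W) : Prop :=
  ∀ n, (π n).2 = s ((List.range n).map π) (π n).1

/-- `s` is winning for Eve in the letter game with winning condition `good`
(a predicate of the word and Eve's weight sequence). -/
def LetterWinning (good : (ℕ → α) → (ℕ → W) → Prop) (s : LStrat α Q W) : Prop :=
  ∀ π : ℕ → LRound α Q W, LConsistent s π →
    A.RunOn (fun n => (π n).1) (fun n => (π n).2) ∧
      good (fun n => (π n).1) (fun n => ((π n).2).1)

/-- `s` witnesses history-determinism: it wins the letter game, where Eve wins a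
play iff the value of her run is at least the value of the word. -/
def HDWinning (Val : (ℕ → W) → ℝ) (s : LStrat α Q W) : Prop :=
  A.LetterWinning (fun w ve => A.wordVal Val w ≤ Val ve) s

/-- `A` is history-deterministic for value function `Val`: Eve wins the letter game. -/
def HD (Val : (ℕ → W) → ℝ) : Prop := ∃ s, A.HDWinning Val s

/-- A round of the `k`-runs letter game: a letter and Eve's `k` transitions. -/
abbrev KRound (α Q W : Type) (k : ℕ) := α × (Fin k → W × Q)

/-- `A` is `k`-history-deterministic: Eve wins the `k`-runs letter game, in which
she moves `k` tokens and wins if the maximum of her runs' values equals the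
value of the word. -/
noncomputable def kHD (k : ℕ) (Val : (ℕ → W) → ℝ) : Prop :=
  ∃ s : List (KRound α Q W k) → α → Fin k → W × Q,
    ∀ π : ℕ → KRound α Q W k,
      (∀ n, (π n).2 = s ((List.range n).map π) (π n).1) →
      (∀ j, A.RunOn (fun n => (π n).1) (fun n => (π n).2 j)) ∧
        (⨆ j, Val (fun n => ((π n).2 j).1)) = A.wordVal Val (fun n => (π n).1)

/-- `h` is a legal finite run prefix of `A` from state `q`. -/
def FinRun (A : QAut α Q W) : Q → List (LRound α Q W) → Prop
  | _, [] => True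
  | q, (a, xq) :: t => (q, a, xq.1, xq.2) ∈ A.trans ∧ FinRun A xq.2 t

/-- The state at the end of a finite run prefix starting from `q`. -/
def endSt : Q → List (LRound α Q W) → Q
  | q, [] => q
  | _, (_, xq) :: t => endSt xq.2 t

/-- The infinite weight sequence obtained by following the finite prefix `pre`
and then the infinite sequence `f`. -/
def splice (pre : List W) (f : ℕ → W) : ℕ → W := fun n =>
  if h : n < pre.length then pre.get ⟨n, h⟩ else f (n - pre.length)

/-- The move `t` of Eve, on letter `σ` after history `h`, is non-cautious:
there is a continuation word `u` (starting with `σ`) and a run `π'` on it from the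
current state whose value (together with the prefix) strictly exceeds the value of
every run on `u` starting with `t`. -/
def NonCautious (Val : (ℕ → W) → ℝ) (h : List (LRound α Q W)) (σ : α) (t : W × Q) : Prop :=
  ∃ u : ℕ → α, u 0 = σ ∧ ∃ π', A.RunFrom (endSt A.init h) u π' ∧
    ∀ π, A.RunFrom (endSt A.init h) u π → π 0 = t →
      Val (splice (h.map (fun r => r.2.1)) (fun n => (π n).1)) <
        Val (splice (h.map (fun r => r.2.1)) (fun n => (π' n).1))

/-- A finite history is consistent with Eve's letter-game strategy `s`. -/
def HistConsistent (s : LStrat α Q W) (h : List (LRound α Q W)) : Prop :=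
  ∀ n (hn : n < h.length), (h.get ⟨n, hn⟩).2 = s (h.take n) (h.get ⟨n, hn⟩).1

/-- Eve's letter-game strategy `s` is cautious: it never makes a non-cautious move
(along histories that arise when playing `s`). -/
def Cautious (Val : (ℕ → W) → ℝ) (s : LStrat α Q W) : Prop :=
  ∀ h, A.FinRun A.init h → HistConsistent s h →
    ∀ σ, ¬ A.NonCautious Val h σ (s h σ)

end QAut

namespace QAut

variable {α Q W : Type}

/-- `τ` is a legal finite run of `A` from `q` over the finite word `u`. -/
def FinRunOn (A : QAut α Q W) : Q → List α → List (W × Q) → Prop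
  | _, [], [] => True
  | q, a :: u, xq :: τ => (q, a, xq.1, xq.2) ∈ A.trans ∧ FinRunOn A xq.2 u τ
  | _, _ :: _, [] => False
  | _, [], _ :: _ => False

/-- The value of the automaton `A` on a finite word `u` for the value function
`Val` on finite sequences: the supremum over runs of `A` on `u`. -/
noncomputable def finWordVal (A : QAut α Q W) (Val : List W → ℝ) (u : List α) : ℝ :=
  sSup { v | ∃ τ, A.FinRunOn A.init u τ ∧ v = Val (τ.map Prod.fst) }

/-- The move `t` of Eve on letter `σ` after history `h` is non-cautious in the
finite-word setting: some finite continuation word `w` admits a run `π'` from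
the current state over `σ·w` whose value (with the prefix) strictly exceeds the
value of every run over `σ·w` starting with `t`. -/
def NonCautiousFin (A : QAut α Q W) (Val : List W → ℝ)
    (h : List (LRound α Q W)) (σ : α) (t : W × Q) : Prop :=
  ∃ w : List α, ∃ π', A.FinRunOn (endSt A.init h) (σ :: w) π' ∧
    ∀ π, A.FinRunOn (endSt A.init h) (σ :: w) π → π.head? = some t →
      Val ((h.map fun r => r.2.1) ++ π.map Prod.fst) <
        Val ((h.map fun r => r.2.1) ++ π'.map Prod.fst)

/-- A letter-game strategy is cautious in the finite-word setting. -/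
def CautiousFin (A : QAut α Q W) (Val : List W → ℝ) (s : LStrat α Q W) : Prop :=
  ∀ h, A.FinRun A.init h → HistConsistent s h →
    ∀ σ, ¬ A.NonCautiousFin Val h σ (s h σ)

/-- `s` is winning for Eve in the letter game on the finite-word automaton `A`:
on every play consistent with `s`, after every finite prefix, Eve's run prefix
is legal and its value is at least the value of `A` on the word prefix. -/
def LetterWinningFin (A : QAut α Q W) (Val : List W → ℝ) (s : LStrat α Q W) : Prop :=
  ∀ π : ℕ → LRound α Q W, LConsistent s π → ∀ n : ℕ,
    A.FinRun A.init ((List.range n).map π) ∧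
      A.finWordVal Val (((List.range n).map π).map Prod.fst) ≤
        Val (((List.range n).map π).map fun r => r.2.1)

end QAut

namespace QAut

variable {α Q W : Type}

lemma exists_finRunOn (A : QAut α Q W) : ∀ (u : List α) (q : Q), ∃ τ, A.FinRunOn q u τ := by
  intro u
  induction u with
  | nil => intro q; exact ⟨[], trivial⟩
  | cons a u ih =>
    intro q
    obtain ⟨x, q', hx⟩ := A.total q a
    obtain ⟨τ, hτ⟩ := ih q'
    exact ⟨(x, q') :: τ, hx, hτ⟩

lemma finRunOn_nil_eq (A : QAut α Q W) {q : Q} {τ : List (W × Q)}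
    (h : A.FinRunOn q [] τ) : τ = [] := by
  cases τ with
  | nil => rfl
  | cons x t => exact absurd h (by simp [FinRunOn])

lemma endSt_append (q : Q) (h : List (LRound α Q W)) (r : LRound α Q W) :
    endSt q (h ++ [r]) = r.2.2 := by
  induction h generalizing q with
  | nil => rfl
  | cons a t ih => exact ih a.2.2

lemma finRun_append (A : QAut α Q W) (q : Q) (h : List (LRound α Q W)) (r : LRound α Q W) :
    A.FinRun q (h ++ [r]) ↔ A.FinRun q h ∧ (endSt q h, r.1, r.2.1, r.2.2) ∈ A.trans := by
  induction h generalizing q with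
  | nil => simp [FinRun, endSt]
  | cons a t ih =>
    obtain ⟨σ, xq⟩ := a
    show ((q, σ, xq.1, xq.2) ∈ A.trans ∧ A.FinRun xq.2 (t ++ [r])) ↔ _
    rw [ih]
    simp only [FinRun, endSt]
    tauto

lemma range_map_succ (π : ℕ → LRound α Q W) (n : ℕ) :
    (List.range (n + 1)).map π = (List.range n).map π ++ [π n] := by
  rw [List.range_succ, List.map_append, List.map_singleton]

lemma histConsistent_of_lconsistent (s : LStrat α Q W) (π : ℕ → LRound α Q W)
    (hc : LConsistent s π) (n : ℕ) : HistConsistent s ((List.range n).map π) := by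
  intro m hm
  have hmn : m < n := by simpa using hm
  have h1 : ((List.range n).map π).get ⟨m, hm⟩ = π m := by
    simp [List.getElem_map, List.getElem_range]
  have h2 : ((List.range n).map π).take m = (List.range m).map π := by
    rw [← List.map_take, List.take_range, Nat.min_eq_left hmn.le]
  rw [h1, h2]
  exact hc m

end QAut

/-- Every value function on finite sequences is present-focused:
for any quantitative automaton `A` on finite words, every cautious strategy for
Eve in the letter game on `A` is winning. -/
theorem finite_words_present_focused {α Q W : Type} (Val : List W → ℝ)
    (A : QAut α Q W) (s : QAut.LStrat α Q W)
    (hs : A.CautiousFin Val s) : A.LetterWinningFin Val s := by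
  intro π hc n
  suffices H : ∀ n, A.FinRun A.init ((List.range n).map π) ∧
      ∀ (w : List α) (π' : List (W × Q)),
        A.FinRunOn A.init ((((List.range n).map π).map Prod.fst) ++ w) π' →
        ∃ πr, A.FinRunOn (QAut.endSt A.init ((List.range n).map π)) w πr ∧
          Val (π'.map Prod.fst) ≤
            Val ((((List.range n).map π).map fun r => r.2.1) ++ πr.map Prod.fst) by
    obtain ⟨h1, h2⟩ := H n
    refine ⟨h1, ?_⟩
    apply csSup_le
    · obtain ⟨τ, hτ⟩ := A.exists_finRunOn _ A.init
      exact ⟨_, τ, hτ, rfl⟩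
    · rintro v ⟨τ, hτ, rfl⟩
      obtain ⟨πr, hπr, hle⟩ := h2 [] τ (by simpa using hτ)
      have hnil := A.finRunOn_nil_eq hπr
      subst hnil
      simpa using hle
  intro n
  induction n with
  | zero =>
    refine ⟨trivial, ?_⟩
    intro w π' hπ'
    exact ⟨π', by simpa [QAut.endSt] using hπ', by simp⟩
  | succ n ih =>
    obtain ⟨ihrun, ihinv⟩ := ih
    have hst : (π n).2 = s ((List.range n).map π) (π n).1 := hc n
    have hcau : ¬ A.NonCautiousFin Val ((List.range n).map π) (π n).1 (π n).2 := by
      rw [hst]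
      exact hs _ ihrun (QAut.histConsistent_of_lconsistent s π hc n) (π n).1
    have tmem : (QAut.endSt A.init ((List.range n).map π), (π n).1, (π n).2.1, (π n).2.2)
        ∈ A.trans := by
      by_contra tmem
      apply hcau
      obtain ⟨x, q', hx⟩ := A.total (QAut.endSt A.init ((List.range n).map π)) (π n).1
      refine ⟨[], [(x, q')], ⟨hx, trivial⟩, ?_⟩
      intro πf hπf hhead
      cases πf with
      | nil => exact absurd hπf (by simp [QAut.FinRunOn])
      | cons p rest =>
        have hp : p = (π n).2 := by simpa using hhead
        exact absurd (hp ▸ hπf.1) tmem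
    have hrun' : A.FinRun A.init ((List.range (n + 1)).map π) := by
      rw [QAut.range_map_succ]
      exact (A.finRun_append _ _ _).mpr ⟨ihrun, tmem⟩
    refine ⟨hrun', ?_⟩
    intro w π' hπ'
    by_contra hno
    push_neg at hno
    have hπ'' : A.FinRunOn A.init
        ((((List.range n).map π).map Prod.fst) ++ ((π n).1 :: w)) π' := by
      have : (((List.range (n + 1)).map π).map Prod.fst) ++ w
          = (((List.range n).map π).map Prod.fst) ++ ((π n).1 :: w) := by
        simp [QAut.range_map_succ]
      rwa [this] at hπ'
    obtain ⟨τ, hτ, hle⟩ := ihinv ((π n).1 :: w) π' hπ''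
    apply hcau
    refine ⟨w, τ, hτ, ?_⟩
    intro πf hπf hhead
    cases πf with
    | nil => exact absurd hπf (by simp [QAut.FinRunOn])
    | cons p rest =>
      have hp : p = (π n).2 := by simpa using hhead
      subst hp
      have hrest : A.FinRunOn (QAut.endSt A.init ((List.range (n + 1)).map π)) w rest := by
        rw [QAut.range_map_succ, QAut.endSt_append]
        exact hπf.2
      have hlt := hno rest hrest
      have heq : (((List.range (n + 1)).map π).map fun r => r.2.1) ++ rest.map Prod.fst
          = (((List.range n).map π).map fun r => r.2.1) ++ (((π n).2 :: rest).map Prod.fst) := by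
        simp [QAut.range_map_succ]
      rw [heq] at hlt
      exact lt_of_lt_of_le hlt hle
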